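/- Let H₁ and H₂ be symmetric positive semi-definite n×n matrices with H₁ ⪰ H₂ (H₁ − H₂ PSD), both of rank n−1 with the same kernel spanned by a unit vector γ₀, and let γ₁ ⊥ γ₀, γ̄ = γ₀ + γ₁. Then (H₁ + γ̄γ̄ᵀ)⁻¹ − γ₀γ₀ᵀ ⪯ (H₂ + γ̄γ̄ᵀ)⁻¹ − γ₀γ₀ᵀ; that is, the asymptotic covariance based on the larger information matrix is smaller in the Loewner order. -/

import Mathlib

open Matrix

/-- A rank-one matrix `v vᵀ` over ℝ is PSD. -/
lemma psd_vecMulVec_self {n : ℕ} (v : Fin n → ℝ) : (vecMulVec v v).PosSemidef := by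
  refine posSemidef_iff_dotProduct_mulVec.mpr ⟨?_, ?_⟩
  · ext i j
    simp [vecMulVec_apply, conjTranspose_apply, mul_comm]
  · intro x
    have h : star x ⬝ᵥ (vecMulVec v v) *ᵥ x = (v ⬝ᵥ x) * (v ⬝ᵥ x) := by
      simp only [dotProduct, mulVec, vecMulVec_apply, Pi.star_apply, star_trivial]
      rw [Finset.sum_mul]
      congr 1; ext i
      rw [Finset.mul_sum, Finset.mul_sum]
      congr 1; ext j
      ring
    rw [h]
    exact mul_self_nonneg _

/-- If `H` has rank `n-1` (with `0 < n`) and kills `γ₀ ≠ 0`, then every kernel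
vector is a multiple of `γ₀`. -/
lemma kernel_of_rank {n : ℕ} (H : Matrix (Fin n) (Fin n) ℝ) (γ₀ : Fin n → ℝ)
    (hn : 0 < n) (hr : H.rank = n - 1) (hk : H.mulVec γ₀ = 0) (hγ : γ₀ ≠ 0) :
    ∀ x, H.mulVec x = 0 → ∃ c : ℝ, x = c • γ₀ := by
  have hker : Module.finrank ℝ (LinearMap.ker H.mulVecLin) = 1 := by
    have h1 := LinearMap.finrank_range_add_finrank_ker H.mulVecLin
    have h2 : Module.finrank ℝ (Fin n → ℝ) = n := by simp
    rw [h2] at h1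
    have : H.rank + Module.finrank ℝ (LinearMap.ker H.mulVecLin) = n := h1
    omega
  have hle : (ℝ ∙ γ₀) ≤ LinearMap.ker H.mulVecLin := by
    rw [Submodule.span_singleton_le_iff_mem]
    exact hk
  have hspan : Module.finrank ℝ (ℝ ∙ γ₀) = 1 := finrank_span_singleton hγ
  have heq : (ℝ ∙ γ₀) = LinearMap.ker H.mulVecLin := by
    apply Submodule.eq_of_le_of_finrank_le hle
    rw [hker, hspan]
  intro x hx
  have : x ∈ (ℝ ∙ γ₀) := heq ▸ (by exact hx : x ∈ LinearMap.ker H.mulVecLin)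
  obtain ⟨c, hc⟩ := Submodule.mem_span_singleton.mp this
  exact ⟨c, hc.symm⟩

/-- Adding `γ̄ γ̄ᵀ` to a PSD matrix whose kernel is spanned by `γ₀`, with
`γ̄ ⬝ᵥ γ₀ ≠ 0`, yields a positive definite matrix. -/
lemma posdef_add_vecMulVec {n : ℕ} (H : Matrix (Fin n) (Fin n) ℝ)
    (γ₀ γb : Fin n → ℝ) (hH : H.PosSemidef)
    (hker : ∀ x, H.mulVec x = 0 → ∃ c : ℝ, x = c • γ₀)
    (hdot : γb ⬝ᵥ γ₀ ≠ 0) :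
    (H + vecMulVec γb γb).PosDef := by
  refine posDef_iff_dotProduct_mulVec.mpr ⟨hH.isHermitian.add (psd_vecMulVec_self γb).isHermitian, fun x hx => ?_⟩
  have hsplit : star x ⬝ᵥ (H + vecMulVec γb γb) *ᵥ x
      = star x ⬝ᵥ H *ᵥ x + (γb ⬝ᵥ x) * (γb ⬝ᵥ x) := by
    rw [add_mulVec, dotProduct_add]
    congr 1
    simp only [dotProduct, mulVec, vecMulVec_apply, Pi.star_apply, star_trivial]
    rw [Finset.sum_mul]
    congr 1; ext i
    rw [Finset.mul_sum, Finset.mul_sum]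
    congr 1; ext j
    ring
  rw [hsplit]
  have h1 : 0 ≤ star x ⬝ᵥ H *ᵥ x := hH.dotProduct_mulVec_nonneg x
  have h2 : 0 ≤ (γb ⬝ᵥ x) * (γb ⬝ᵥ x) := mul_self_nonneg _
  rcases lt_or_eq_of_le h1 with h | h
  · linarith
  · -- star x ⬝ᵥ H x = 0, so H x = 0, so x = c γ₀ with c ≠ 0
    have hx0 : H.mulVec x = 0 := (hH.dotProduct_mulVec_zero_iff x).mp h.symm
    obtain ⟨c, rfl⟩ := hker x hx0
    have hc : c ≠ 0 := by
      rintro rfl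
      simp at hx
    have : γb ⬝ᵥ (c • γ₀) = c * (γb ⬝ᵥ γ₀) := by
      simp [dotProduct_smul, smul_eq_mul]
    rw [this]
    have hpos : 0 < c * (γb ⬝ᵥ γ₀) * (c * (γb ⬝ᵥ γ₀)) :=
      mul_self_pos.mpr (mul_ne_zero hc hdot)
    linarith

set_option maxHeartbeats 1000000 in
/-- Matrix inversion is antitone in the Loewner order on positive definite
matrices. -/
lemma inv_sub_inv_posSemidef {n : ℕ} {A B : Matrix (Fin n) (Fin n) ℝ}
    (hA : A.PosDef) (hB : B.PosDef) (hAB : (A - B).PosSemidef) :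
    (B⁻¹ - A⁻¹).PosSemidef := by
  have hAd : IsUnit A.det := hA.det_pos.ne'.isUnit
  have hBd : IsUnit B.det := hB.det_pos.ne'.isUnit
  have hAi : A * A⁻¹ = 1 := mul_nonsing_inv A hAd
  have hAi' : A⁻¹ * A = 1 := nonsing_inv_mul A hAd
  have hBi : B * B⁻¹ = 1 := mul_nonsing_inv B hBd
  have hBi' : B⁻¹ * B = 1 := nonsing_inv_mul B hBd
  set D := A - B with hD
  -- e2 : B⁻¹ - A⁻¹ = A⁻¹ * D * B⁻¹
  have e2 : B⁻¹ - A⁻¹ = A⁻¹ * D * B⁻¹ := by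
    have : A⁻¹ * D * B⁻¹ = A⁻¹ * A * B⁻¹ - A⁻¹ * B * B⁻¹ := by
      rw [hD]; noncomm_ring
    rw [this, hAi', one_mul, mul_assoc, hBi, mul_one]
  -- e1 : B⁻¹ = A⁻¹ + B⁻¹ * D * A⁻¹
  have e1 : B⁻¹ = A⁻¹ + B⁻¹ * D * A⁻¹ := by
    have : A⁻¹ + B⁻¹ * D * A⁻¹ = B⁻¹ * B * A⁻¹ + B⁻¹ * D * A⁻¹ := by
      rw [hBi', one_mul]
    rw [this]
    have : B⁻¹ * B * A⁻¹ + B⁻¹ * D * A⁻¹ = B⁻¹ * (B + D) * A⁻¹ := by noncomm_ring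
    rw [this, hD]
    have : B + (A - B) = A := by abel
    rw [this, mul_assoc, hAi, mul_one]
  have key : B⁻¹ - A⁻¹ = A⁻¹ * D * A⁻¹ + A⁻¹ * D * B⁻¹ * D * A⁻¹ := by
    calc B⁻¹ - A⁻¹ = A⁻¹ * D * B⁻¹ := e2
      _ = A⁻¹ * D * (A⁻¹ + B⁻¹ * D * A⁻¹) := by rw [← e1]
      _ = A⁻¹ * D * A⁻¹ + A⁻¹ * D * B⁻¹ * D * A⁻¹ := by noncomm_ring
  rw [key]
  have hAinvH : A⁻¹ᴴ = A⁻¹ := hA.isHermitian.inv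
  have hDH : Dᴴ = D := hAB.isHermitian
  have t1 : (A⁻¹ * D * A⁻¹).PosSemidef := by
    have := hAB.mul_mul_conjTranspose_same A⁻¹
    rwa [hAinvH] at this
  have t2 : (A⁻¹ * D * B⁻¹ * D * A⁻¹).PosSemidef := by
    have := hB.inv.posSemidef.mul_mul_conjTranspose_same (A⁻¹ * D)
    rwa [conjTranspose_mul, hAinvH, hDH, ← mul_assoc] at this
  exact t1.add t2

theorem loewner_order_of_inverses {n : ℕ}
    (H₁ H₂ : Matrix (Fin n) (Fin n) ℝ) (γ₀ γ₁ : Fin n → ℝ)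
    (hH₁ : H₁.PosSemidef) (hH₂ : H₂.PosSemidef)
    (hord : (H₁ - H₂).PosSemidef)
    (hr₁ : H₁.rank = n - 1) (hr₂ : H₂.rank = n - 1)
    (hk₁ : H₁.mulVec γ₀ = 0) (hk₂ : H₂.mulVec γ₀ = 0)
    (hunit : γ₀ ⬝ᵥ γ₀ = 1) (horth : γ₀ ⬝ᵥ γ₁ = 0) :
    (((H₂ + vecMulVec (γ₀ + γ₁) (γ₀ + γ₁))⁻¹ - vecMulVec γ₀ γ₀)
      - ((H₁ + vecMulVec (γ₀ + γ₁) (γ₀ + γ₁))⁻¹ - vecMulVec γ₀ γ₀)).PosSemidef := by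
  have hn : 0 < n := by
    rcases Nat.eq_zero_or_pos n with h | h
    · subst h
      simp [dotProduct] at hunit
    · exact h
  have hγ₀ : γ₀ ≠ 0 := by
    rintro rfl
    simp at hunit
  have hdot : (γ₀ + γ₁) ⬝ᵥ γ₀ ≠ 0 := by
    have : (γ₀ + γ₁) ⬝ᵥ γ₀ = γ₀ ⬝ᵥ γ₀ + γ₀ ⬝ᵥ γ₁ := by
      rw [add_dotProduct, dotProduct_comm γ₁ γ₀]
    rw [this, hunit, horth]
    norm_num
  have hpd₁ : (H₁ + vecMulVec (γ₀ + γ₁) (γ₀ + γ₁)).PosDef :=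
    posdef_add_vecMulVec H₁ γ₀ (γ₀ + γ₁) hH₁
      (kernel_of_rank H₁ γ₀ hn hr₁ hk₁ hγ₀) hdot
  have hpd₂ : (H₂ + vecMulVec (γ₀ + γ₁) (γ₀ + γ₁)).PosDef :=
    posdef_add_vecMulVec H₂ γ₀ (γ₀ + γ₁) hH₂
      (kernel_of_rank H₂ γ₀ hn hr₂ hk₂ hγ₀) hdot
  have hsub : ((H₁ + vecMulVec (γ₀ + γ₁) (γ₀ + γ₁))
      - (H₂ + vecMulVec (γ₀ + γ₁) (γ₀ + γ₁))).PosSemidef := by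
    have : (H₁ + vecMulVec (γ₀ + γ₁) (γ₀ + γ₁))
        - (H₂ + vecMulVec (γ₀ + γ₁) (γ₀ + γ₁)) = H₁ - H₂ := by abel
    rw [this]; exact hord
  have := inv_sub_inv_posSemidef hpd₁ hpd₂ hsub
  have hgoal : ((H₂ + vecMulVec (γ₀ + γ₁) (γ₀ + γ₁))⁻¹ - vecMulVec γ₀ γ₀)
      - ((H₁ + vecMulVec (γ₀ + γ₁) (γ₀ + γ₁))⁻¹ - vecMulVec γ₀ γ₀)
      = (H₂ + vecMulVec (γ₀ + γ₁) (γ₀ + γ₁))⁻¹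
        - (H₁ + vecMulVec (γ₀ + γ₁) (γ₀ + γ₁))⁻¹ := by abel
  rw [hgoal]
  exact this
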